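/- arXiv:math/0511536 — 2 statements merged into one kernel-verified Lean document; each statement's English description precedes it below -/
import Mathlib

section
/- There exist constants 0 < c ≤ C < ∞ (depending on Λ) and an integer b₀ such that for all b ≥ b₀: c ( b² Λ([0,1/b]) + b ∫_{[1/b,1]} x^{-1} dΛ(x) ) ≤ γ_b ≤ C ( b² Λ([0,1/b]) + b ∫_{[1/b,1]} x^{-1} dΛ(x) ). -/
open MeasureTheory Finset Filter

/-- `lamBK μ b k` is `λ_{b,k} = ∫_{[0,1]} x^{k-2} (1-x)^{b-k} dΛ(x)`. -/
noncomputable def lamBK (μ : Measure ℝ) (b k : ℕ) : ℝ :=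
  ∫ x in Set.Icc (0:ℝ) 1, x ^ (k - 2) * (1 - x) ^ (b - k) ∂μ

/-- `lamB μ b` is `λ_b = Σ_{k=2}^b C(b,k) λ_{b,k}`. -/
noncomputable def lamB (μ : Measure ℝ) (b : ℕ) : ℝ :=
  ∑ k ∈ Finset.Icc 2 b, (b.choose k : ℝ) * lamBK μ b k

/-- `gamB μ b` is `γ_b = Σ_{k=2}^b C(b,k) (k-1) λ_{b,k}`. -/
noncomputable def gamB (μ : Measure ℝ) (b : ℕ) : ℝ :=
  ∑ k ∈ Finset.Icc 2 b, (b.choose k : ℝ) * ((k : ℝ) - 1) * lamBK μ b k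

lemma bin1 (n : ℕ) (x : ℝ) :
    ∑ j ∈ range (n+1), (n.choose j : ℝ) * (x^j * (1-x)^(n-j)) = 1 := by
  have h := add_pow x (1-x) n
  rw [show x + (1-x) = 1 by ring, one_pow] at h
  conv_rhs => rw [h]
  exact Finset.sum_congr rfl fun j _ => by ring

lemma nat_id1 (b j : ℕ) (hb : 1 ≤ b) :
    b.choose (j+1) * (j+1) = b * (b-1).choose j := by
  have h := Nat.add_one_mul_choose_eq (b-1) j
  simp only [Nat.succ_eq_add_one, Nat.sub_add_cancel hb] at h
  exact h.symm

lemma nat_id2 (b j : ℕ) (hb : 2 ≤ b) :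
    b.choose (j+2) * ((j+2) * (j+1)) = b * (b-1) * (b-2).choose j := by
  have h1 := nat_id1 b (j+1) (by omega)
  have h2 := nat_id1 (b-1) j (by omega)
  have h3 : b - 1 - 1 = b - 2 := by omega
  rw [h3] at h2
  calc b.choose (j+2) * ((j+2)*(j+1)) = (b.choose (j+2) * (j+2)) * (j+1) := by ring
    _ = b * ((b-1).choose (j+1) * (j+1)) := by rw [h1]; ring
    _ = b * ((b-1) * (b-2).choose j) := by rw [h2]
    _ = b * (b-1) * (b-2).choose j := by ring

lemma S2 (b : ℕ) (hb : 1 ≤ b) (x : ℝ) :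
    ∑ k ∈ range (b+1), (k:ℝ) * (b.choose k : ℝ) * (x^k * (1-x)^(b-k)) = b * x := by
  rw [Finset.sum_range_succ']
  have h0 : ((0:ℕ):ℝ) * (b.choose 0 : ℝ) * (x^0 * (1-x)^(b-0)) = 0 := by simp
  rw [h0, add_zero]
  have key : ∀ j ∈ range b, ((j+1:ℕ):ℝ) * (b.choose (j+1) : ℝ) * (x^(j+1) * (1-x)^(b-(j+1)))
      = (b:ℝ) * x * (((b-1).choose j : ℝ) * (x^j * (1-x)^((b-1)-j))) := by
    intro j _
    have hc : ((b.choose (j+1) * (j+1) : ℕ) : ℝ) = ((b * (b-1).choose j : ℕ) : ℝ) := by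
      rw [nat_id1 b j hb]
    push_cast at hc
    have he : b - (j+1) = (b-1) - j := by omega
    rw [he, pow_succ]
    push_cast
    linear_combination (x^j * x * (1-x)^((b-1)-j)) * hc
  rw [Finset.sum_congr rfl key, ← Finset.mul_sum]
  have hbin := bin1 (b-1) x
  rw [show (b-1)+1 = b from by omega] at hbin
  rw [hbin, mul_one]

lemma keyIdent (b : ℕ) (hb : 2 ≤ b) (x : ℝ) :
    ∑ k ∈ Icc 2 b, (b.choose k : ℝ) * ((k:ℝ)-1) * (x^k * (1-x)^(b-k))
      = b*x - 1 + (1-x)^b := by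
  set g : ℕ → ℝ := fun k => (b.choose k : ℝ) * ((k:ℝ)-1) * (x^k * (1-x)^(b-k)) with hg
  have hfull : ∑ k ∈ range (b+1), g k = b*x - 1 := by
    have : ∀ k ∈ range (b+1), g k
        = (k:ℝ) * (b.choose k : ℝ) * (x^k * (1-x)^(b-k))
          - (b.choose k : ℝ) * (x^k * (1-x)^(b-k)) := by
      intro k _; simp only [hg]; ring
    rw [Finset.sum_congr rfl this, Finset.sum_sub_distrib, S2 b (by omega) x, bin1 b x]
  have hsplit : ∑ k ∈ range (b+1), g k = (g 0 + g 1) + ∑ k ∈ Icc 2 b, g k := by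
    rw [Finset.range_eq_Ico, ← Finset.sum_Ico_consecutive _ (by omega : 0 ≤ 2) (by omega : 2 ≤ b+1),
      Finset.Ico_add_one_right_eq_Icc]
    congr 1
    rw [show Finset.Ico (0:ℕ) 2 = {0,1} from rfl, Finset.sum_pair (by norm_num)]
  have hg0 : g 0 = -(1-x)^b := by simp [hg]
  have hg1 : g 1 = 0 := by simp [hg]
  have := hfull
  rw [hsplit, hg0, hg1] at this
  linarith

lemma bin2 (b : ℕ) (hb : 2 ≤ b) (x : ℝ) :
    ∑ k ∈ Icc 2 b, (b.choose k : ℝ) * ((k:ℝ)*((k:ℝ)-1)) * (x^(k-2) * (1-x)^(b-k))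
      = (b:ℝ) * ((b:ℝ)-1) := by
  rw [show Finset.Icc 2 b = Finset.Ico 2 (b+1) from (Finset.Ico_add_one_right_eq_Icc 2 b).symm,
    Finset.sum_Ico_eq_sum_range]
  have hkey : ∀ j ∈ range (b+1-2), (b.choose (2+j) : ℝ) * (((2+j:ℕ):ℝ)*(((2+j:ℕ):ℝ)-1)) * (x^((2+j)-2) * (1-x)^(b-(2+j)))
      = (b:ℝ) * ((b:ℝ)-1) * (((b-2).choose j : ℝ) * (x^j * (1-x)^((b-2)-j))) := by
    intro j _
    have hc : ((b.choose (j+2) * ((j+2)*(j+1)) : ℕ) : ℝ) = ((b * (b-1) * (b-2).choose j : ℕ) : ℝ) := by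
      rw [nat_id2 b j hb]
    push_cast at hc
    have hb1 : ((b-1:ℕ):ℝ) = (b:ℝ) - 1 := by
      have : (1:ℕ) ≤ b := by omega
      push_cast [this]; ring
    rw [hb1] at hc
    have he1 : (2+j)-2 = j := by omega
    have he2 : b-(2+j) = (b-2)-j := by omega
    have he3 : 2+j = j+2 := by omega
    rw [he1, he2, he3]
    push_cast
    linear_combination (x^j * (1-x)^((b-2)-j)) * hc
  rw [Finset.sum_congr rfl hkey, ← Finset.mul_sum]
  have hbin := bin1 (b-2) x
  rw [show (b-2)+1 = b+1-2 from by omega] at hbin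
  rw [hbin, mul_one]

noncomputable def Fb (b : ℕ) (x : ℝ) : ℝ :=
  ∑ k ∈ Icc 2 b, (b.choose k : ℝ) * ((k:ℝ)-1) * (x^(k-2) * (1-x)^(b-k))

lemma F_sq (b : ℕ) (hb : 2 ≤ b) (x : ℝ) :
    x^2 * Fb b x = (b:ℝ)*x - 1 + (1-x)^b := by
  unfold Fb
  rw [Finset.mul_sum]
  rw [Finset.sum_congr rfl (fun k hk => ?_), keyIdent b hb x]
  have hk2 : 2 ≤ k := (Finset.mem_Icc.mp hk).1
  have hx : x^2 * x^(k-2) = x^k := by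
    rw [← pow_add]; congr 1; omega
  calc x^2 * ((b.choose k : ℝ) * ((k:ℝ)-1) * (x^(k-2) * (1-x)^(b-k)))
      = (b.choose k : ℝ) * ((k:ℝ)-1) * ((x^2 * x^(k-2)) * (1-x)^(b-k)) := by ring
    _ = (b.choose k : ℝ) * ((k:ℝ)-1) * (x^k * (1-x)^(b-k)) := by rw [hx]

lemma F_le (b : ℕ) (hb : 2 ≤ b) (x : ℝ) (hx : 0 ≤ x) (hx1 : x ≤ 1) :
    Fb b x ≤ (b:ℝ)^2 := by
  have h2 := bin2 b hb x
  have hle : Fb b x ≤ ∑ k ∈ Icc 2 b, (b.choose k : ℝ) * ((k:ℝ)*((k:ℝ)-1)) * (x^(k-2) * (1-x)^(b-k)) := by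
    apply Finset.sum_le_sum
    intro k hk
    have hk2 : (2:ℝ) ≤ (k:ℝ) := by exact_mod_cast (Finset.mem_Icc.mp hk).1
    have hnn : (0:ℝ) ≤ x^(k-2) * (1-x)^(b-k) :=
      mul_nonneg (pow_nonneg hx _) (pow_nonneg (by linarith) _)
    have hcnn : (0:ℝ) ≤ (b.choose k : ℝ) := by positivity
    nlinarith [mul_nonneg (mul_nonneg hcnn (sq_nonneg ((k:ℝ)-1))) hnn, hk2]
  have : (b:ℝ) * ((b:ℝ)-1) ≤ (b:ℝ)^2 := by nlinarith [Nat.cast_nonneg (α := ℝ) b]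
  linarith [hle, h2.le, this, h2.ge]

lemma pow18 (b : ℕ) (hb : 3 ≤ b) : (1/8:ℝ) ≤ (1 - 2/(b:ℝ))^(b-2) := by
  have hb3 : (3:ℝ) ≤ (b:ℝ) := by exact_mod_cast hb
  have hb0 : (0:ℝ) < b := by linarith
  have hm0 : (0:ℝ) < (b:ℝ) - 2 := by linarith
  have hmcast : ((b-2:ℕ):ℝ) = (b:ℝ) - 2 := by
    have : (2:ℕ) ≤ b := by omega
    push_cast [this]; ring
  have h1 : (b:ℝ)/((b:ℝ)-2) ≤ Real.exp (2/((b:ℝ)-2)) := by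
    have := Real.add_one_le_exp (2/((b:ℝ)-2))
    have heq : (b:ℝ)/((b:ℝ)-2) = 2/((b:ℝ)-2) + 1 := by field_simp; ring
    linarith [heq ▸ this]
  have h2 : ((b:ℝ)/((b:ℝ)-2))^(b-2) ≤ Real.exp 2 := by
    calc ((b:ℝ)/((b:ℝ)-2))^(b-2) ≤ (Real.exp (2/((b:ℝ)-2)))^(b-2) := by
          apply pow_le_pow_left₀ (by positivity) h1
      _ = Real.exp (((b-2:ℕ):ℝ) * (2/((b:ℝ)-2))) := by rw [Real.exp_nat_mul]
      _ = Real.exp 2 := by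
          have harg : ((b-2:ℕ):ℝ) * (2/((b:ℝ)-2)) = 2 := by
            rw [hmcast]; field_simp
          rw [harg]
  have hexp2 : Real.exp 2 ≤ 8 := by
    have h := Real.exp_one_lt_d9
    have : Real.exp 2 = Real.exp 1 * Real.exp 1 := by
      rw [← Real.exp_add]; norm_num
    nlinarith [Real.exp_pos 1]
  have hP : (0:ℝ) < ((b:ℝ)/((b:ℝ)-2))^(b-2) := by positivity
  have hprod : (1 - 2/(b:ℝ)) * ((b:ℝ)/((b:ℝ)-2)) = 1 := by
    field_simp
  have hmul : (1 - 2/(b:ℝ))^(b-2) * ((b:ℝ)/((b:ℝ)-2))^(b-2) = 1 := by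
    rw [← mul_pow, hprod, one_pow]
  have h8 : ((b:ℝ)/((b:ℝ)-2))^(b-2) ≤ 8 := le_trans h2 hexp2
  calc (1/8:ℝ) ≤ 1/((b:ℝ)/((b:ℝ)-2))^(b-2) := by
        apply one_div_le_one_div_of_le hP h8
    _ = (1 - 2/(b:ℝ))^(b-2) := by
        field_simp
        have hq : (b:ℝ)/((b:ℝ)-2) * (((b:ℝ)-2)/(b:ℝ)) = 1 := by
          rw [div_mul_div_comm, mul_comm (b:ℝ) ((b:ℝ)-2), div_self (mul_pos hm0 hb0).ne']
        rw [← mul_pow, hq, one_pow]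

lemma F_ge_small (b : ℕ) (hb : 3 ≤ b) (x : ℝ) (hx : 0 ≤ x) (hx2 : x ≤ 2/(b:ℝ)) :
    (b:ℝ)^2/32 ≤ Fb b x := by
  have hb3 : (3:ℝ) ≤ (b:ℝ) := by exact_mod_cast hb
  have hb0 : (0:ℝ) < b := by linarith
  have h2b1 : 2/(b:ℝ) ≤ 1 := by rw [div_le_one hb0]; linarith
  have hx1 : x ≤ 1 := le_trans hx2 h2b1
  have hterm : (b.choose 2 : ℝ) * ((2:ℝ)-1) * (x^(2-2) * (1-x)^(b-2)) ≤ Fb b x := by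
    unfold Fb
    apply Finset.single_le_sum (f := fun k => (b.choose k : ℝ) * ((k:ℝ)-1) * (x^(k-2) * (1-x)^(b-k)))
    · intro k hk
      have hk2 : (2:ℝ) ≤ (k:ℝ) := by exact_mod_cast (Finset.mem_Icc.mp hk).1
      have hnn : (0:ℝ) ≤ x^(k-2) * (1-x)^(b-k) :=
        mul_nonneg (pow_nonneg hx _) (pow_nonneg (by linarith) _)
      have hcnn : (0:ℝ) ≤ (b.choose k : ℝ) := by positivity
      exact mul_nonneg (mul_nonneg hcnn (by linarith : (0:ℝ) ≤ (k:ℝ)-1)) hnn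
    · exact Finset.mem_Icc.mpr ⟨le_rfl, by omega⟩
  have hch : (b.choose 2 : ℝ) = (b:ℝ)*((b:ℝ)-1)/2 := by
    rw [Nat.cast_choose_two]
  have hpow : (1/8:ℝ) ≤ (1-x)^(b-2) := by
    refine le_trans (pow18 b hb) ?_
    apply pow_le_pow_left₀ (by linarith [div_nonneg (by norm_num : (0:ℝ) ≤ 2) hb0.le]) (by linarith)
  have hbb : (0:ℝ) ≤ (b:ℝ)*((b:ℝ)-1)/2 := by nlinarith
  have hkey := mul_le_mul_of_nonneg_left hpow hbb
  have hbb2 : (0:ℝ) ≤ (b:ℝ)*((b:ℝ)-2) := mul_nonneg (by linarith) (by linarith)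
  have e22 : (2:ℕ)-2 = 0 := rfl
  rw [e22, pow_zero, one_mul, hch] at hterm
  nlinarith [hterm, hkey, hbb2]

lemma F_le_div (b : ℕ) (hb : 2 ≤ b) (x : ℝ) (hx : 0 < x) (hx1 : x ≤ 1) :
    Fb b x ≤ (b:ℝ)/x := by
  have hsq := F_sq b hb x
  have hpow : (1-x)^b ≤ 1 := pow_le_one₀ (by linarith) (by linarith)
  rw [le_div_iff₀ hx]
  nlinarith [hsq, hpow, hx, mul_pos hx hx]

lemma F_ge_div (b : ℕ) (hb : 3 ≤ b) (x : ℝ) (hx : 1/(b:ℝ) < x) (hx1 : x ≤ 1) :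
    (1/32) * ((b:ℝ)/x) ≤ Fb b x := by
  have hb3 : (3:ℝ) ≤ (b:ℝ) := by exact_mod_cast hb
  have hb0 : (0:ℝ) < b := by linarith
  have hxpos : 0 < x := lt_trans (one_div_pos.mpr hb0) hx
  by_cases hc : x ≤ 2/(b:ℝ)
  · have hF := F_ge_small b hb x hxpos.le hc
    have hxinv : 1/x < (b:ℝ) := by
      rw [div_lt_iff₀ hxpos]
      rw [div_lt_iff₀ hb0] at hx
      linarith
    have : (b:ℝ)/x ≤ (b:ℝ)^2 := by
      rw [div_le_iff₀ hxpos]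
      rw [div_lt_iff₀ hb0] at hx
      nlinarith
    nlinarith
  · push_neg at hc
    have hbx : 2 < (b:ℝ)*x := by
      rw [div_lt_iff₀ hb0] at hc; linarith
    have hsq := F_sq b (by omega) x
    have hpnn : (0:ℝ) ≤ (1-x)^b := pow_nonneg (by linarith) _
    have h1 : x*x*Fb b x ≥ ((b:ℝ)/2)*x := by nlinarith [hsq]
    have h2 : Fb b x * x ≥ (b:ℝ)/2 := by nlinarith [h1, hxpos]
    have heq : (1/32) * ((b:ℝ)/x) = ((1/32)*(b:ℝ))/x := by ring
    rw [heq, div_le_iff₀ hxpos]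
    linarith

lemma contAux (c : ℝ) (m n : ℕ) : Continuous (fun x:ℝ => c * (x^m * (1-x)^n)) :=
  continuous_const.mul ((continuous_pow m).mul ((continuous_const.sub continuous_id).pow n))

lemma gamB_eq (μ : Measure ℝ) [IsFiniteMeasure μ] (b : ℕ) :
    gamB μ b = ∫ x in Set.Icc (0:ℝ) 1, Fb b x ∂μ := by
  unfold gamB lamBK
  have hint : ∀ k : ℕ, IntegrableOn
      (fun x:ℝ => (b.choose k : ℝ) * ((k:ℝ)-1) * (x^(k-2)*(1-x)^(b-k))) (Set.Icc 0 1) μ := by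
    intro k
    apply ContinuousOn.integrableOn_Icc
    exact Continuous.continuousOn (contAux _ _ _)
  have hcong : ∀ k ∈ Finset.Icc 2 b,
      (b.choose k : ℝ) * ((k:ℝ)-1) * ∫ x in Set.Icc (0:ℝ) 1, x^(k-2)*(1-x)^(b-k) ∂μ
      = ∫ x in Set.Icc (0:ℝ) 1, (b.choose k : ℝ) * ((k:ℝ)-1) * (x^(k-2)*(1-x)^(b-k)) ∂μ := by
    intro k _
    rw [MeasureTheory.integral_const_mul]
  rw [Finset.sum_congr rfl hcong, ← MeasureTheory.integral_finset_sum _ (fun k _ => hint k)]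
  rfl

theorem gamB_asymp (μ : Measure ℝ) [IsFiniteMeasure μ]
    (h0 : μ {0} = 0) (h1 : μ {1} = 0)
    (hsupp : μ ((Set.Icc (0:ℝ) 1)ᶜ) = 0) (hpos : 0 < μ (Set.Icc (0:ℝ) 1)) :
    ∃ c C : ℝ, 0 < c ∧ c ≤ C ∧ ∃ b₀ : ℕ, ∀ b : ℕ, b₀ ≤ b →
      c * ((b : ℝ) ^ 2 * (μ (Set.Icc (0:ℝ) (1 / b))).toReal
            + (b : ℝ) * ∫ x in Set.Icc (1 / (b:ℝ)) 1, 1 / x ∂μ)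
          ≤ gamB μ b ∧
        gamB μ b ≤ C * ((b : ℝ) ^ 2 * (μ (Set.Icc (0:ℝ) (1 / b))).toReal
            + (b : ℝ) * ∫ x in Set.Icc (1 / (b:ℝ)) 1, 1 / x ∂μ) := by
  refine ⟨1/64, 1, by norm_num, by norm_num, 3, ?_⟩
  intro b hb
  have hb2 : 2 ≤ b := by omega
  have hb3 : (3:ℝ) ≤ (b:ℝ) := by exact_mod_cast hb
  have hb0 : (0:ℝ) < b := by linarith
  have hinv_pos : 0 < 1/(b:ℝ) := one_div_pos.mpr hb0
  have hinv_le : 1/(b:ℝ) ≤ 1 := by rw [div_le_one hb0]; linarith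
  set s₁ : Set ℝ := Set.Icc (0:ℝ) (1/(b:ℝ)) with hs₁
  set s₂ : Set ℝ := Set.Ioc (1/(b:ℝ)) 1 with hs₂
  set M : ℝ := (μ s₁).toReal with hM
  set J : ℝ := ∫ x in s₂, 1/x ∂μ with hJ
  set I : ℝ := ∫ x in Set.Icc (1/(b:ℝ)) 1, 1/x ∂μ with hI
  set E : ℝ := ∫ x in ({1/(b:ℝ)} : Set ℝ), 1/x ∂μ with hE
  have hs1sub : s₁ ⊆ Set.Icc (0:ℝ) 1 := Set.Icc_subset_Icc le_rfl hinv_le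
  have hs2sub : s₂ ⊆ Set.Icc (0:ℝ) 1 := fun x hx =>
    ⟨le_of_lt (lt_trans hinv_pos hx.1), hx.2⟩
  have hFint : IntegrableOn (Fb b) (Set.Icc (0:ℝ) 1) μ := by
    apply ContinuousOn.integrableOn_Icc
    apply Continuous.continuousOn
    unfold Fb
    exact continuous_finset_sum _ (fun k _ => contAux _ _ _)
  have hsplit_set : Set.Icc (0:ℝ) 1 = s₁ ∪ s₂ :=
    (Set.Icc_union_Ioc_eq_Icc (le_of_lt hinv_pos) hinv_le).symm
  have hdisj : Disjoint s₁ s₂ := by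
    rw [Set.disjoint_left]
    intro x h1 h2
    exact absurd h1.2 (not_le.mpr h2.1)
  have hint_split : ∫ x in Set.Icc (0:ℝ) 1, Fb b x ∂μ
      = (∫ x in s₁, Fb b x ∂μ) + ∫ x in s₂, Fb b x ∂μ := by
    rw [hsplit_set]
    exact setIntegral_union hdisj measurableSet_Ioc
      (hFint.mono_set hs1sub) (hFint.mono_set hs2sub)
  -- integrability of 1/x
  have hIcc_cont : IntegrableOn (fun x:ℝ => 1/x) (Set.Icc (1/(b:ℝ)) 1) μ := by
    apply ContinuousOn.integrableOn_Icc
    exact ContinuousOn.div continuousOn_const continuousOn_id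
      (fun x hx => ne_of_gt (lt_of_lt_of_le hinv_pos hx.1))
  have hIoc_sub : s₂ ⊆ Set.Icc (1/(b:ℝ)) 1 := Set.Ioc_subset_Icc_self
  have hsing_sub : ({1/(b:ℝ)} : Set ℝ) ⊆ Set.Icc (1/(b:ℝ)) 1 :=
    Set.singleton_subset_iff.mpr ⟨le_rfl, hinv_le⟩
  -- bounds on s₁
  have hμs1 : μ s₁ ≠ ⊤ := measure_ne_top μ s₁
  have hup1 : ∫ x in s₁, Fb b x ∂μ ≤ (b:ℝ)^2 * M := by
    have h := setIntegral_mono_on (hFint.mono_set hs1sub)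
      (integrableOn_const (measure_ne_top μ s₁)) measurableSet_Icc
      (fun x hx => F_le b hb2 x hx.1 (le_trans hx.2 hinv_le))
    rw [setIntegral_const, smul_eq_mul, measureReal_def] at h
    linarith [h]
  have hlo1 : (1/32) * ((b:ℝ)^2 * M) ≤ ∫ x in s₁, Fb b x ∂μ := by
    have h12 : 1/(b:ℝ) ≤ 2/(b:ℝ) := by
      rw [div_le_div_iff₀ hb0 hb0]; nlinarith
    have h := setIntegral_mono_on
      (integrableOn_const (measure_ne_top μ s₁))
      (hFint.mono_set hs1sub) measurableSet_Icc
      (fun x hx => F_ge_small b hb x hx.1 (le_trans hx.2 h12))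
    rw [setIntegral_const, smul_eq_mul, measureReal_def] at h
    have : M * ((b:ℝ)^2/32) = (1/32) * ((b:ℝ)^2 * M) := by ring
    linarith [h]
  -- bounds on s₂
  have hup2 : ∫ x in s₂, Fb b x ∂μ ≤ (b:ℝ) * J := by
    have h := setIntegral_mono_on (hFint.mono_set hs2sub)
      (((hIcc_cont.mono_set hIoc_sub).const_mul ((b:ℝ))))
      measurableSet_Ioc
      (fun x hx =>
        calc Fb b x ≤ (b:ℝ)/x := F_le_div b hb2 x (lt_trans hinv_pos hx.1) hx.2
          _ = (b:ℝ) * (1/x) := by ring)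
    rw [MeasureTheory.integral_const_mul] at h
    exact h
  have hlo2 : (1/32) * ((b:ℝ) * J) ≤ ∫ x in s₂, Fb b x ∂μ := by
    have h := setIntegral_mono_on
      ((((hIcc_cont.mono_set hIoc_sub).const_mul ((b:ℝ))).const_mul ((1:ℝ)/32)))
      (hFint.mono_set hs2sub)
      measurableSet_Ioc
      (fun x hx =>
        calc (1/32:ℝ) * ((b:ℝ) * (1/x)) = (1/32) * ((b:ℝ)/x) := by ring
          _ ≤ Fb b x := F_ge_div b hb x hx.1 hx.2)
    rw [MeasureTheory.integral_const_mul, MeasureTheory.integral_const_mul] at h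
    exact h
  -- singleton decomposition
  have hIccIoc : Set.Icc (1/(b:ℝ)) 1 = ({1/(b:ℝ)} : Set ℝ) ∪ s₂ := by
    rw [← Set.Icc_self (1/(b:ℝ)), Set.Icc_union_Ioc_eq_Icc le_rfl hinv_le]
  have hdisj2 : Disjoint ({1/(b:ℝ)} : Set ℝ) s₂ := by
    rw [Set.disjoint_singleton_left]
    intro h
    exact absurd h.1 (lt_irrefl _)
  have hIEJ : I = E + J := by
    rw [hI, hIccIoc]
    exact setIntegral_union hdisj2 measurableSet_Ioc
      (hIcc_cont.mono_set hsing_sub) (hIcc_cont.mono_set hIoc_sub)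
  have hE_nonneg : 0 ≤ E :=
    setIntegral_nonneg (measurableSet_singleton _)
      (fun x hx => by
        rw [Set.mem_singleton_iff] at hx
        rw [hx]; positivity)
  have hE_le : E ≤ (b:ℝ) * M := by
    have hcongE : E = ∫ _ in ({1/(b:ℝ)} : Set ℝ), (b:ℝ) ∂μ := by
      apply setIntegral_congr_fun (measurableSet_singleton _)
      intro x hx
      rw [Set.mem_singleton_iff] at hx
      rw [hx, one_div_one_div]
    rw [hcongE, setIntegral_const, smul_eq_mul, measureReal_def]
    have hμle : (μ ({1/(b:ℝ)} : Set ℝ)).toReal ≤ M :=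
      ENNReal.toReal_le_toReal (measure_ne_top _ _) hμs1 |>.mpr
        (measure_mono (Set.singleton_subset_iff.mpr ⟨hinv_pos.le, le_rfl⟩))
    nlinarith [hμle, hb0, ENNReal.toReal_nonneg (a := μ ({1/(b:ℝ)} : Set ℝ))]
  have hJ_nonneg : 0 ≤ J :=
    setIntegral_nonneg measurableSet_Ioc
      (fun x hx => le_of_lt (one_div_pos.mpr (lt_trans hinv_pos hx.1)))
  have hM_nonneg : 0 ≤ M := ENNReal.toReal_nonneg
  -- assemble
  have hγ : gamB μ b = (∫ x in s₁, Fb b x ∂μ) + ∫ x in s₂, Fb b x ∂μ :=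
    (gamB_eq μ b).trans hint_split
  have hBIeq : (b:ℝ) * I = (b:ℝ) * E + (b:ℝ) * J := by rw [hIEJ]; ring
  have hBE_le : (b:ℝ) * E ≤ (b:ℝ)^2 * M := by nlinarith [hE_le, hb0]
  have hBE_nonneg : 0 ≤ (b:ℝ) * E := mul_nonneg hb0.le hE_nonneg
  have hBJ_nonneg : 0 ≤ (b:ℝ) * J := mul_nonneg hb0.le hJ_nonneg
  constructor
  · linarith [hlo1, hlo2, hγ, hBIeq, hBE_le, hBJ_nonneg]
  · linarith [hup1, hup2, hγ, hBIeq, hBE_nonneg]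
end

section
/- There exists a finite constant ρ ≥ 1, independent of Λ, such that for every finite nonzero measure Λ on [0,1] with no atoms at 0 or 1 and all integers b, m ≥ 2 with b/m ≥ 2, one has λ_b ≤ m^ρ λ_{⌈b/m⌉}. -/
open MeasureTheory Finset Filter

/-- The pointwise integrand of `lamB`. -/
noncomputable def Sg (b : ℕ) (x : ℝ) : ℝ :=
  ∑ k ∈ Finset.Icc 2 b, (b.choose k : ℝ) * (x ^ (k - 2) * (1 - x) ^ (b - k))

lemma Sg_succ (n : ℕ) (hn : 1 ≤ n) (x : ℝ) :
    Sg (n + 1) x = Sg n x + n * (1 - x) ^ (n - 1) := by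
  have h1 : Sg (n + 1) x
      = (∑ k ∈ Finset.Icc 2 (n + 1), (n.choose k : ℝ) * (x ^ (k - 2) * (1 - x) ^ (n + 1 - k)))
      + ∑ k ∈ Finset.Icc 2 (n + 1), (n.choose (k - 1) : ℝ) * (x ^ (k - 2) * (1 - x) ^ (n + 1 - k)) := by
    rw [Sg, ← Finset.sum_add_distrib]
    refine Finset.sum_congr rfl fun k hk => ?_
    simp only [Finset.mem_Icc] at hk
    obtain ⟨j, rfl⟩ : ∃ j, k = j + 1 := ⟨k - 1, by omega⟩
    rw [Nat.choose_succ_succ, Nat.add_sub_cancel]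
    push_cast
    ring
  have h2 : (∑ k ∈ Finset.Icc 2 (n + 1), (n.choose k : ℝ) * (x ^ (k - 2) * (1 - x) ^ (n + 1 - k)))
      = (1 - x) * Sg n x := by
    rw [Finset.sum_Icc_succ_top (by omega)]
    rw [Nat.choose_succ_self]
    rw [Sg, Finset.mul_sum]
    simp only [Nat.cast_zero, zero_mul, add_zero]
    refine Finset.sum_congr rfl fun k hk => ?_
    simp only [Finset.mem_Icc] at hk
    have hnk : n + 1 - k = (n - k) + 1 := by omega
    rw [hnk]
    ring
  have h3 : (∑ k ∈ Finset.Icc 2 (n + 1), (n.choose (k - 1) : ℝ) * (x ^ (k - 2) * (1 - x) ^ (n + 1 - k)))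
      = x * Sg n x + n * (1 - x) ^ (n - 1) := by
    have hre : (∑ k ∈ Finset.Icc 2 (n + 1), (n.choose (k - 1) : ℝ) * (x ^ (k - 2) * (1 - x) ^ (n + 1 - k)))
        = ∑ j ∈ Finset.Icc 1 n, (n.choose j : ℝ) * (x ^ (j - 1) * (1 - x) ^ (n - j)) := by
      refine Finset.sum_nbij' (fun k => k - 1) (fun j => j + 1) ?_ ?_ ?_ ?_ ?_
      · intro k hk; simp only [Finset.mem_Icc] at *; omega
      · intro j hj; simp only [Finset.mem_Icc] at *; omega
      · intro k hk; simp only [Finset.mem_Icc] at hk; omega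
      · intro j hj; omega
      · intro k hk
        simp only [Finset.mem_Icc] at hk
        have e1 : k - 2 = (k - 1) - 1 := by omega
        have e2 : n + 1 - k = n - (k - 1) := by omega
        rw [e1, e2]
    rw [hre]
    have hsplit : Finset.Icc 1 n = insert 1 (Finset.Icc 2 n) := by
      ext k; simp only [Finset.mem_Icc, Finset.mem_insert]; omega
    rw [hsplit, Finset.sum_insert (by simp)]
    rw [Sg, Finset.mul_sum]
    rw [add_comm]
    congr 1
    · refine Finset.sum_congr rfl fun k hk => ?_
      simp only [Finset.mem_Icc] at hk
      have e : k - 1 = (k - 2) + 1 := by omega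
      rw [e]
      ring
    · norm_num
  rw [h1, h2, h3]
  ring

lemma Sg_term_nonneg (b k : ℕ) {x : ℝ} (hx : x ∈ Set.Icc (0:ℝ) 1) :
    0 ≤ (b.choose k : ℝ) * (x ^ (k - 2) * (1 - x) ^ (b - k)) := by
  obtain ⟨hx0, hx1⟩ := hx
  have h1 : 0 ≤ 1 - x := by linarith
  positivity

lemma Sg_nonneg (b : ℕ) {x : ℝ} (hx : x ∈ Set.Icc (0:ℝ) 1) : 0 ≤ Sg b x :=
  Finset.sum_nonneg fun k _ => Sg_term_nonneg b k hx

lemma Sg_lb (n : ℕ) (hn : 2 ≤ n) {x : ℝ} (hx : x ∈ Set.Icc (0:ℝ) 1) :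
    (n.choose 2 : ℝ) * (1 - x) ^ (n - 2) ≤ Sg n x := by
  have h := Finset.single_le_sum
    (f := fun k => (n.choose k : ℝ) * (x ^ (k - 2) * (1 - x) ^ (n - k)))
    (fun k _ => Sg_term_nonneg n k hx) (Finset.mem_Icc.mpr ⟨le_refl 2, hn⟩)
  simpa [Sg] using h

lemma Sg_key (a : ℕ) (ha : 2 ≤ a) : ∀ b, a ≤ b → ∀ x ∈ Set.Icc (0:ℝ) 1,
    (a.choose 2 : ℝ) * Sg b x ≤ (b.choose 2 : ℝ) * Sg a x := by
  intro b hb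
  induction b, hb using Nat.le_induction with
  | base => intro x _; exact le_rfl
  | succ n hn ih =>
    intro x hx
    obtain ⟨hx0, hx1⟩ := hx
    rw [Sg_succ n (by omega) x]
    have h1 := ih x ⟨hx0, hx1⟩
    have h2 : (a.choose 2 : ℝ) * (1 - x) ^ (n - 1) ≤ Sg a x := by
      calc (a.choose 2 : ℝ) * (1 - x) ^ (n - 1)
          ≤ (a.choose 2 : ℝ) * (1 - x) ^ (a - 2) := by
            refine mul_le_mul_of_nonneg_left ?_ (by positivity)
            exact pow_le_pow_of_le_one (by linarith) (by linarith) (by omega)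
        _ ≤ Sg a x := Sg_lb a ha ⟨hx0, hx1⟩
    have hchoose : ((n + 1).choose 2 : ℝ) = (n.choose 2 : ℝ) + n := by
      have : (n + 1).choose 2 = n.choose 1 + n.choose 2 := Nat.choose_succ_succ n 1
      rw [this, Nat.choose_one_right]
      push_cast; ring
    have h3 : (n : ℝ) * ((a.choose 2 : ℝ) * (1 - x) ^ (n - 1)) ≤ (n : ℝ) * Sg a x :=
      mul_le_mul_of_nonneg_left h2 (by positivity)
    rw [hchoose]
    nlinarith [h1, h3]

lemma integrable_term (μ : Measure ℝ) [IsFiniteMeasure μ] (b k : ℕ) :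
    IntegrableOn (fun x : ℝ => x ^ (k - 2) * (1 - x) ^ (b - k)) (Set.Icc (0:ℝ) 1) μ :=
  ContinuousOn.integrableOn_compact isCompact_Icc (by fun_prop)

lemma Sg_integrable (μ : Measure ℝ) [IsFiniteMeasure μ] (b : ℕ) :
    IntegrableOn (Sg b) (Set.Icc (0:ℝ) 1) μ :=
  ContinuousOn.integrableOn_compact isCompact_Icc (by unfold Sg; fun_prop)

lemma lamB_eq (μ : Measure ℝ) [IsFiniteMeasure μ] (b : ℕ) :
    lamB μ b = ∫ x in Set.Icc (0:ℝ) 1, Sg b x ∂μ := by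
  unfold lamB lamBK Sg
  rw [integral_finset_sum _ (fun k _ => ((integrable_term μ b k).const_mul _))]
  exact Finset.sum_congr rfl fun k _ => (integral_const_mul _ _).symm

theorem lamB_power_law :
    ∃ ρ : ℝ, 1 ≤ ρ ∧
      ∀ (μ : Measure ℝ), IsFiniteMeasure μ → μ {0} = 0 → μ {1} = 0 →
        μ ((Set.Icc (0:ℝ) 1)ᶜ) = 0 → 0 < μ (Set.Icc (0:ℝ) 1) →
        ∀ b m : ℕ, 2 ≤ b → 2 ≤ m → 2 ≤ (b : ℝ) / (m : ℝ) →
          lamB μ b ≤ (m : ℝ) ^ ρ * lamB μ ⌈(b : ℝ) / (m : ℝ)⌉₊ := by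
  refine ⟨3, by norm_num, ?_⟩
  intro μ hfin _ _ _ _ b m hb hm hbm
  haveI := hfin
  set a := ⌈(b : ℝ) / (m : ℝ)⌉₊ with ha
  have hm0 : (0:ℝ) < m := by exact_mod_cast (by omega : 0 < m)
  have hceil := Nat.le_ceil ((b : ℝ) / (m : ℝ))
  rw [← ha] at hceil
  have ha2 : 2 ≤ a := by
    have h2a : (2:ℝ) ≤ (a : ℝ) := le_trans hbm hceil
    exact_mod_cast h2a
  have hab : a ≤ b := by
    rw [ha]
    refine Nat.ceil_le.mpr ?_
    rw [div_le_iff₀ hm0]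
    have hM : (1:ℝ) ≤ (m:ℝ) := by exact_mod_cast (by omega : 1 ≤ m)
    nlinarith [Nat.cast_nonneg (α := ℝ) b]
  have hbam : (b : ℝ) ≤ (a : ℝ) * m := by
    rw [div_le_iff₀ hm0] at hceil
    exact hceil
  -- key integral inequality
  have key : (a.choose 2 : ℝ) * lamB μ b ≤ (b.choose 2 : ℝ) * lamB μ a := by
    rw [lamB_eq, lamB_eq, ← integral_const_mul, ← integral_const_mul]
    exact setIntegral_mono_on ((Sg_integrable μ b).const_mul _)
      ((Sg_integrable μ a).const_mul _) measurableSet_Icc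
      (fun x hx => Sg_key a ha2 b hab x hx)
  have hla : 0 ≤ lamB μ a := by
    rw [lamB_eq]
    exact setIntegral_nonneg measurableSet_Icc fun x hx => Sg_nonneg a hx
  have hchoose : (b.choose 2 : ℝ) ≤ (m : ℝ) ^ (3:ℕ) * (a.choose 2 : ℝ) := by
    rw [Nat.cast_choose_two, Nat.cast_choose_two]
    have hA : (2:ℝ) ≤ (a:ℝ) := by exact_mod_cast ha2
    have hB : (2:ℝ) ≤ (b:ℝ) := by exact_mod_cast hb
    have hM : (2:ℝ) ≤ (m:ℝ) := by exact_mod_cast hm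
    nlinarith [mul_le_mul hbam hbam (by linarith) (by positivity),
      mul_nonneg (mul_nonneg (le_of_lt hm0) (le_of_lt hm0)) (by linarith : (0:ℝ) ≤ (a:ℝ) - 2),
      sq_nonneg ((a:ℝ) * (m:ℝ)), mul_pos hm0 hm0]
  have hCa : (0:ℝ) < (a.choose 2 : ℝ) := by
    exact_mod_cast Nat.choose_pos ha2
  have hfin2 : lamB μ b ≤ (m : ℝ) ^ (3:ℕ) * lamB μ a := by
    have h4 : (a.choose 2 : ℝ) * lamB μ b ≤ (a.choose 2 : ℝ) * ((m : ℝ) ^ (3:ℕ) * lamB μ a) := by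
      calc (a.choose 2 : ℝ) * lamB μ b ≤ (b.choose 2 : ℝ) * lamB μ a := key
        _ ≤ ((m : ℝ) ^ (3:ℕ) * (a.choose 2 : ℝ)) * lamB μ a :=
            mul_le_mul_of_nonneg_right hchoose hla
        _ = (a.choose 2 : ℝ) * ((m : ℝ) ^ (3:ℕ) * lamB μ a) := by ring
    exact le_of_mul_le_mul_left h4 hCa
  have hrpow : (m : ℝ) ^ (3:ℝ) = (m : ℝ) ^ (3:ℕ) := by
    rw [show ((3:ℝ)) = ((3:ℕ) : ℝ) by norm_num, Real.rpow_natCast]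
  rw [hrpow]
  exact hfin2
end
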